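/- For each i = 1,...,n, let ℓᵢ ⊆ ℝ² be the closed segment with endpoints (i,0) and (0, n+1−i). Then for all i ≠ j, ℓᵢ ∩ ℓⱼ ≠ ∅, and no point of ℝ² lies on three distinct segments ℓᵢ, ℓⱼ, ℓₖ. -/

import Mathlib

/-- Intersection point of two segments lies on the first. -/
lemma seg_mem_aux (m a b : ℝ) (hb0 : 0 ≤ b) (hbm : b ≤ m) (hm : 0 < m) :
    ((a * b / m, (m - a) * (m - b) / m) : ℝ × ℝ) ∈
      segment ℝ ((a, 0) : ℝ × ℝ) (0, m - a) := by
  refine ⟨b / m, (m - b) / m, div_nonneg hb0 hm.le,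
    div_nonneg (by linarith) hm.le, ?_, ?_⟩
  · field_simp; ring
  · ext <;> simp [Prod.smul_def] <;> field_simp <;> ring

/-- Points on the segment satisfy the line equation. -/
lemma seg_line (m a : ℝ) (p : ℝ × ℝ)
    (hp : p ∈ segment ℝ ((a, 0) : ℝ × ℝ) (0, m - a)) :
    p.1 * (m - a) + p.2 * a = a * (m - a) := by
  obtain ⟨u, v, hu, hv, huv, hp⟩ := hp
  have h1 : p.1 = u * a := by rw [← hp]; simp [Prod.smul_def]
  have h2 : p.2 = v * (m - a) := by rw [← hp]; simp [Prod.smul_def]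
  rw [h1, h2]; linear_combination (a * (m - a)) * huv

/-- The segments `ℓᵢ` from `(i,0)` to `(0, n+1-i)` (for `i = 1,…,n`) pairwise
intersect, but no three of them are concurrent. -/
theorem stmt_9 (n : ℕ) (ℓ : Fin n → Set (ℝ × ℝ))
    (hℓ : ∀ i : Fin n, ℓ i = segment ℝ (((i : ℕ) + 1 : ℝ), 0)
      (0, ((n : ℝ) + 1 - ((i : ℕ) + 1)))) :
    (∀ i j : Fin n, i ≠ j → (ℓ i ∩ ℓ j).Nonempty) ∧
    (∀ i j k : Fin n, i ≠ j → i ≠ k → j ≠ k → ℓ i ∩ ℓ j ∩ ℓ k = ∅) := by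
  set m : ℝ := (n : ℝ) + 1 with hm
  have hbound : ∀ i : Fin n, (0 : ℝ) ≤ ((i : ℕ) + 1 : ℝ) ∧ ((i : ℕ) + 1 : ℝ) ≤ m := by
    intro i
    constructor
    · positivity
    · have := i.isLt
      have : ((i : ℕ) : ℝ) ≤ (n : ℝ) := by exact_mod_cast Nat.le_of_lt this
      linarith
  have hmpos : (0 : ℝ) < m := by positivity
  constructor
  · intro i j _
    set a : ℝ := ((i:ℕ)+1:ℝ) with hadef
    set b : ℝ := ((j:ℕ)+1:ℝ) with hbdef
    refine ⟨(a * b / m, (m - a) * (m - b) / m), ?_, ?_⟩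
    · rw [hℓ i]
      exact seg_mem_aux m a b (hbound j).1 (hbound j).2 hmpos
    · rw [hℓ j]
      have := seg_mem_aux m b a (hbound i).1 (hbound i).2 hmpos
      convert this using 2
      · ring
      · ring
  · intro i j k hij hik hjk
    ext p
    simp only [Set.mem_inter_iff, Set.mem_empty_iff_false, iff_false]
    rintro ⟨⟨hpi, hpj⟩, hpk⟩
    rw [hℓ i] at hpi; rw [hℓ j] at hpj; rw [hℓ k] at hpk
    have ei := seg_line m _ p hpi
    have ej := seg_line m _ p hpj
    have ek := seg_line m _ p hpk
    set a : ℝ := ((i:ℕ)+1:ℝ)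
    set b : ℝ := ((j:ℕ)+1:ℝ)
    set c : ℝ := ((k:ℕ)+1:ℝ)
    have hab : a ≠ b := by
      simp only [a, b, Ne, add_left_inj, Nat.cast_inj]
      exact fun h => hij (Fin.ext h)
    have hac : a ≠ c := by
      simp only [a, c, Ne, add_left_inj, Nat.cast_inj]
      exact fun h => hik (Fin.ext h)
    have hbc : b ≠ c := by
      simp only [b, c, Ne, add_left_inj, Nat.cast_inj]
      exact fun h => hjk (Fin.ext h)
    have h1 : (a - b) * (a + b + p.2 - p.1 - m) = 0 := by nlinarith [ei, ej]
    have h2 : (a - c) * (a + c + p.2 - p.1 - m) = 0 := by nlinarith [ei, ek]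
    have e1 : a + b + p.2 - p.1 - m = 0 :=
      (mul_eq_zero.1 h1).resolve_left (sub_ne_zero.2 hab)
    have e2 : a + c + p.2 - p.1 - m = 0 :=
      (mul_eq_zero.1 h2).resolve_left (sub_ne_zero.2 hac)
    exact hbc (by linarith)
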